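/- A finite simple graph G is an interval graph if and only if there exists a total (linear) order ≤_T on the set of maximal cliques of G such that for all maximal cliques C_i, C_j, C_k with C_i ≤_T C_j ≤_T C_k, C_i ∩ C_k ⊆ C_j. -/

import Mathlib

/-- `G` is an interval graph: vertices can be assigned closed real intervals so
that distinct vertices are adjacent iff their intervals intersect. -/
def IsIntervalGraph {V : Type*} (G : SimpleGraph V) : Prop :=
  ∃ l r : V → ℝ, (∀ v, l v ≤ r v) ∧
    ∀ u v : V, u ≠ v → (G.Adj u v ↔ l u ≤ r v ∧ l v ≤ r u)

/-- A maximal clique of `G`: a clique not properly contained in any other clique. -/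
def MaxCliq {V : Type*} (G : SimpleGraph V) (A : Set V) : Prop :=
  G.IsClique A ∧ ∀ B : Set V, G.IsClique B → A ⊆ B → A = B

/-- A finite graph is an interval graph iff its maximal cliques can be linearly
ordered so that consecutiveness holds: whenever `Cᵢ ≤ Cⱼ ≤ Cₖ`, `Cᵢ ∩ Cₖ ⊆ Cⱼ`. -/
theorem stmt14 {V : Type*} [Fintype V] (G : SimpleGraph V) :
    IsIntervalGraph G ↔
    ∃ t : Set V → Set V → Prop,
      (∀ A B, MaxCliq G A → MaxCliq G B → t A B ∨ t B A) ∧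
      (∀ A B, MaxCliq G A → MaxCliq G B → t A B → t B A → A = B) ∧
      (∀ A B C, MaxCliq G A → MaxCliq G B → MaxCliq G C → t A B → t B C → t A C) ∧
      (∀ A B C, MaxCliq G A → MaxCliq G B → MaxCliq G C → t A B → t B C → A ∩ C ⊆ B) := by
  classical
  constructor
  · -- Forward: interval representation gives the order on maximal cliques
    rintro ⟨l, r, hlr, hadj⟩
    set p : Set V → ℝ := fun A => sSup (l '' A) with hp
    -- a maximal clique distinct from another maximal clique is nonempty
    have hne : ∀ A B : Set V, MaxCliq G A → MaxCliq G B → A ≠ B → A.Nonempty := by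
      intro A B hA hB hAB
      by_contra h
      rw [Set.not_nonempty_iff_eq_empty] at h
      exact hAB (h ▸ hA.2 B hB.1 (h ▸ Set.empty_subset B))
    -- key: a nonempty maximal clique is exactly the set of intervals containing p A
    have key : ∀ A : Set V, MaxCliq G A → A.Nonempty →
        ∀ v, v ∈ A ↔ l v ≤ p A ∧ p A ≤ r v := by
      intro A hA hAne v
      have hfin : (l '' A).Finite := (A.toFinite.image l)
      have hmem : p A ∈ l '' A := (hAne.image l).csSup_mem hfin
      obtain ⟨w, hwA, hwp⟩ := hmem
      have hub : ∀ x ∈ A, l x ≤ p A := fun x hx =>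
        le_csSup hfin.bddAbove (Set.mem_image_of_mem l hx)
      have hr : ∀ x ∈ A, p A ≤ r x := by
        intro x hx
        rw [← hwp]
        by_cases hwx : w = x
        · exact hwx ▸ hlr w
        · exact ((hadj w x hwx).mp (hA.1 hwA hx hwx)).1
      constructor
      · intro hv; exact ⟨hub v hv, hr v hv⟩
      · rintro ⟨h1, h2⟩
        have hclique : G.IsClique (insert v A) := by
          rw [SimpleGraph.isClique_insert]
          refine ⟨hA.1, fun b hb hvb => ?_⟩
          exact (hadj v b hvb).mpr ⟨le_trans h1 (hr b hb), le_trans (hub b hb) h2⟩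
        have := hA.2 (insert v A) hclique (Set.subset_insert v A)
        rw [this]; exact Set.mem_insert v A
    -- injectivity of p on maximal cliques
    have hinj : ∀ A B : Set V, MaxCliq G A → MaxCliq G B → p A = p B → A = B := by
      intro A B hA hB hpAB
      by_cases hAB : A = B
      · exact hAB
      · have hAne := hne A B hA hB hAB
        have hBne := hne B A hB hA (Ne.symm hAB)
        ext v
        rw [key A hA hAne v, key B hB hBne v, hpAB]
    refine ⟨fun A B => A = B ∨ p A < p B, ?_, ?_, ?_, ?_⟩
    · intro A B hA hB
      by_cases hAB : A = B
      · exact Or.inl (Or.inl hAB)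
      · rcases lt_trichotomy (p A) (p B) with h | h | h
        · exact Or.inl (Or.inr h)
        · exact absurd (hinj A B hA hB h) hAB
        · exact Or.inr (Or.inr h)
    · rintro A B _ _ (h | h) (h' | h')
      · exact h
      · exact h
      · exact h'.symm
      · exact absurd (lt_trans h h') (lt_irrefl _)
    · rintro A B C _ _ _ (h | h) (h' | h')
      · exact Or.inl (h.trans h')
      · exact Or.inr (h ▸ h')
      · exact Or.inr (h' ▸ h)
      · exact Or.inr (lt_trans h h')
    · rintro A B C hA hB hC (h | h) (h' | h')
      · exact h ▸ Set.inter_subset_left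
      · exact h ▸ Set.inter_subset_left
      · exact h' ▸ Set.inter_subset_right
      · intro v hv
        have hBne : B.Nonempty := hne B A hB hA (fun hh => lt_irrefl _ (hh ▸ h))
        have hAne : A.Nonempty := ⟨v, hv.1⟩
        have hCne : C.Nonempty := ⟨v, hv.2⟩
        have h1 : l v ≤ p A := ((key A hA hAne v).mp hv.1).1
        have h2 : p C ≤ r v := ((key C hC hCne v).mp hv.2).2
        exact (key B hB hBne v).mpr ⟨le_of_lt (lt_of_le_of_lt h1 h),
          le_of_lt (lt_of_lt_of_le h' h2)⟩
  · -- Backward: order on maximal cliques gives an interval representation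
    rintro ⟨t, htot, hanti, htrans, hhelly⟩
    have hrefl : ∀ A, MaxCliq G A → t A A := fun A hA => (htot A A hA hA).elim id id
    set f : Set V → ℝ := fun A => ((Set.ncard {B | MaxCliq G B ∧ t B A} : ℕ) : ℝ) with hf
    have hmono : ∀ A B, MaxCliq G A → MaxCliq G B → t A B → f A ≤ f B := by
      intro A B hA hB hAB
      have hsub : {C | MaxCliq G C ∧ t C A} ⊆ {C | MaxCliq G C ∧ t C B} :=
        fun C hC => ⟨hC.1, htrans C A B hC.1 hA hB hC.2 hAB⟩
      simp only [hf]
      exact_mod_cast Set.ncard_le_ncard hsub (Set.toFinite _)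
    have hstrict : ∀ A B, MaxCliq G A → MaxCliq G B → t A B → A ≠ B → f A < f B := by
      intro A B hA hB hAB hne
      have hss : {C | MaxCliq G C ∧ t C A} ⊂ {C | MaxCliq G C ∧ t C B} := by
        constructor
        · exact fun C hC => ⟨hC.1, htrans C A B hC.1 hA hB hC.2 hAB⟩
        · intro hcon
          have hB' : B ∈ {C | MaxCliq G C ∧ t C B} := ⟨hB, hrefl B hB⟩
          have := (hcon hB').2
          exact hne (hanti A B hA hB hAB this)
      simp only [hf]
      exact_mod_cast Set.ncard_lt_ncard hss (Set.toFinite _)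
    have hreflect : ∀ A B, MaxCliq G A → MaxCliq G B → f A ≤ f B → t A B := by
      intro A B hA hB hfAB
      rcases htot A B hA hB with h | h
      · exact h
      · by_cases hAB : A = B
        · exact hAB ▸ hrefl A hA
        · exact absurd (hstrict B A hB hA h (Ne.symm hAB)) (not_lt.mpr hfAB)
    -- every clique extends to a maximal clique
    have hext : ∀ s : Set V, G.IsClique s → ∃ A, MaxCliq G A ∧ s ⊆ A := by
      intro s hs
      set S := {B | G.IsClique B ∧ s ⊆ B} with hS
      have hSne : S.Nonempty := ⟨s, hs, subset_refl s⟩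
      obtain ⟨A, hAS, hmax'⟩ := Set.Finite.exists_maximalFor Set.ncard S (Set.toFinite S) hSne
      have hmax : ∀ B ∈ S, A.ncard ≤ B.ncard → A.ncard = B.ncard :=
        fun B hB h => le_antisymm h (hmax' hB h)
      refine ⟨A, ⟨hAS.1, fun B hB hAB => ?_⟩, hAS.2⟩
      have hBS : B ∈ S := ⟨hB, hAS.2.trans hAB⟩
      have h1 : A.ncard ≤ B.ncard := Set.ncard_le_ncard hAB (Set.toFinite B)
      exact Set.eq_of_subset_of_ncard_le hAB (le_of_eq (hmax B hBS h1).symm) (Set.toFinite B)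
    set Sv : V → Set ℝ := fun v => f '' {A | MaxCliq G A ∧ v ∈ A} with hSv
    have hSvfin : ∀ v, (Sv v).Finite := fun v => Set.toFinite _
    have hSvne : ∀ v, (Sv v).Nonempty := by
      intro v
      obtain ⟨A, hA, hvA⟩ := hext {v} (G.isClique_singleton v)
      exact ⟨f A, A, ⟨hA, hvA rfl⟩, rfl⟩
    refine ⟨fun v => sInf (Sv v), fun v => sSup (Sv v), fun v =>
      csInf_le_csSup (hSvne v) (hSvfin v).bddBelow (hSvfin v).bddAbove, ?_⟩
    intro u v huv
    constructor
    · intro hadj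
      have hpair : G.IsClique {u, v} := by
        rw [SimpleGraph.isClique_pair]; exact fun _ => hadj
      obtain ⟨D, hD, hsub⟩ := hext {u, v} hpair
      have huD : u ∈ D := hsub (by simp)
      have hvD : v ∈ D := hsub (by simp)
      have h1 : sInf (Sv u) ≤ f D := csInf_le (hSvfin u).bddBelow ⟨D, ⟨hD, huD⟩, rfl⟩
      have h2 : f D ≤ sSup (Sv v) := le_csSup (hSvfin v).bddAbove ⟨D, ⟨hD, hvD⟩, rfl⟩
      have h3 : sInf (Sv v) ≤ f D := csInf_le (hSvfin v).bddBelow ⟨D, ⟨hD, hvD⟩, rfl⟩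
      have h4 : f D ≤ sSup (Sv u) := le_csSup (hSvfin u).bddAbove ⟨D, ⟨hD, huD⟩, rfl⟩
      exact ⟨h1.trans h2, h3.trans h4⟩
    · rintro ⟨h1, h2⟩
      -- extract attaining cliques
      obtain ⟨Au, ⟨hAu, huAu⟩, hfAu⟩ := (hSvne u).csInf_mem (hSvfin u)
      obtain ⟨Bu, ⟨hBu, huBu⟩, hfBu⟩ := (hSvne u).csSup_mem (hSvfin u)
      obtain ⟨Av, ⟨hAv, hvAv⟩, hfAv⟩ := (hSvne v).csInf_mem (hSvfin v)
      obtain ⟨Bv, ⟨hBv, hvBv⟩, hfBv⟩ := (hSvne v).csSup_mem (hSvfin v)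
      rcases le_total (sInf (Sv u)) (sInf (Sv v)) with hcase | hcase
      · -- u's interval starts first: u ∈ Au ∩ Bu, t Au Av, t Av Bu ⇒ u ∈ Av
        have t1 : t Au Av := hreflect Au Av hAu hAv (by rw [hfAu, hfAv]; exact hcase)
        have t2 : t Av Bu := hreflect Av Bu hAv hBu (by rw [hfAv, hfBu]; exact h2)
        have hu : u ∈ Av := hhelly Au Av Bu hAu hAv hBu t1 t2 ⟨huAu, huBu⟩
        exact hAv.1 hu hvAv huv
      · have t1 : t Av Au := hreflect Av Au hAv hAu (by rw [hfAv, hfAu]; exact hcase)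
        have t2 : t Au Bv := hreflect Au Bv hAu hBv (by rw [hfAu, hfBv]; exact h1)
        have hv : v ∈ Au := hhelly Av Au Bv hAv hAu hBv t1 t2 ⟨hvAv, hvBv⟩
        exact (hAu.1 hv huAu (Ne.symm huv)).symm
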